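/- There are constants c_0, c_1 > 0 such that for all integers n, M, N with 1 ≤ n ≤ c_0·min(M,N), every randomized algorithm using n function values for computing the mean S_N on B_∞^N(L_∞^M) (with outputs in L_∞^M, error measured in the L_∞^M norm) has worst-case expected error at least c_1 · min( n^{−1/2}·(log(M+1))^{1/2}, 1 ) (logarithm to base 2). -/

import Mathlib

/-- The `L_∞^M` norm on `ℝ^M`: `‖x‖ = max_i |x i|`. -/
noncomputable def linfNorm (M : ℕ) (x : Fin M → ℝ) : ℝ :=
  ⨆ i, |x i|

namespace MeanLinfAux
open Finset

noncomputable def rsign (v : Bool) : ℝ := if v then 1 else -1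
lemma rsign_abs (v : Bool) : |rsign v| = 1 := by cases v <;> simp [rsign]
lemma rsign_not (v : Bool) : rsign (!v) = - rsign v := by cases v <;> simp [rsign]

lemma sum_bool_rsign_pow (k : ℕ) : ∑ v : Bool, rsign v ^ k = 1 + (-1:ℝ)^k := by
  rw [Fintype.sum_bool]; simp [rsign]

lemma master (K : ℕ) (c : Fin K → ℕ) :
    ∑ ε : Fin K → Bool, ∏ b, (rsign (ε b))^(c b) =
      if ∀ b, Even (c b) then (2:ℝ)^K else 0 := by
  classical
  have h1 : ∏ b, ∑ v : Bool, (rsign v)^(c b)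
      = ∑ ε ∈ Fintype.piFinset (fun _ : Fin K => (Finset.univ : Finset Bool)), ∏ b, (rsign (ε b))^(c b) :=
    Finset.prod_univ_sum _ _
  rw [Fintype.piFinset_univ] at h1
  rw [← h1]
  by_cases h : ∀ b, Even (c b)
  · rw [if_pos h]
    have h2 : ∀ b : Fin K, ∑ v : Bool, (rsign v)^(c b) = 2 := by
      intro b
      rw [sum_bool_rsign_pow, (h b).neg_one_pow]; norm_num
    rw [Finset.prod_congr rfl (fun b _ => h2 b)]
    simp
  · rw [if_neg h]
    push_neg at h
    obtain ⟨b, hb⟩ := h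
    apply Finset.prod_eq_zero (Finset.mem_univ b)
    have hodd : Odd (c b) := Nat.odd_iff.mpr (by rw [Nat.even_iff] at hb; omega)
    rw [sum_bool_rsign_pow, hodd.neg_one_pow]; norm_num

lemma prod_single_pow {K : ℕ} (ε : Fin K → Bool) (b : Fin K) :
    ∏ d, (rsign (ε d))^(if d = b then 1 else 0) = rsign (ε b) := by
  classical
  have : ∀ d : Fin K, (rsign (ε d))^(if d = b then 1 else 0)
      = if d = b then rsign (ε d) else 1 := by
    intro d; split_ifs <;> simp
  rw [Finset.prod_congr rfl (fun d _ => this d), Finset.prod_ite_eq' Finset.univ b]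
  simp

lemma pair {K : ℕ} (b b' : Fin K) :
    ∑ ε : Fin K → Bool, rsign (ε b) * rsign (ε b') = if b' = b then (2:ℝ)^K else 0 := by
  classical
  have h := master K (fun d => (if d = b then 1 else 0) + (if d = b' then 1 else 0))
  have h2 : ∀ ε : Fin K → Bool,
      ∏ d, (rsign (ε d))^((if d = b then 1 else 0) + (if d = b' then 1 else 0))
        = rsign (ε b) * rsign (ε b') := by
    intro ε
    simp only [pow_add, Finset.prod_mul_distrib, prod_single_pow]
  rw [Finset.sum_congr rfl (fun ε _ => h2 ε)] at h
  rw [h]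
  by_cases hbb : b' = b
  · subst hbb
    rw [if_pos, if_pos rfl]
    intro d; by_cases hd : d = b' <;> simp [hd]
  · rw [if_neg, if_neg hbb]
    intro hall
    have := hall b
    rw [if_pos rfl, if_neg (fun hh => hbb hh.symm)] at this
    simp at this

lemma quad {K : ℕ} (b1 b2 b3 b4 : Fin K) :
    ∑ ε : Fin K → Bool, rsign (ε b1) * rsign (ε b2) * rsign (ε b3) * rsign (ε b4)
      = if (∀ d, Even ((if d = b1 then 1 else 0) + (if d = b2 then 1 else 0)
          + (if d = b3 then 1 else 0) + (if d = b4 then 1 else 0))) then (2:ℝ)^K else 0 := by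
  classical
  have h := master K (fun d => (if d = b1 then 1 else 0) + (if d = b2 then 1 else 0)
          + (if d = b3 then 1 else 0) + (if d = b4 then 1 else 0))
  have h2 : ∀ ε : Fin K → Bool,
      ∏ d, (rsign (ε d))^((if d = b1 then 1 else 0) + (if d = b2 then 1 else 0)
          + (if d = b3 then 1 else 0) + (if d = b4 then 1 else 0))
        = rsign (ε b1) * rsign (ε b2) * rsign (ε b3) * rsign (ε b4) := by
    intro ε
    simp only [pow_add, Finset.prod_mul_distrib, prod_single_pow]
  rw [← Finset.sum_congr rfl (fun ε _ => h2 ε), h]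

lemma pairing {α : Type*} [DecidableEq α] (b1 b2 b3 b4 : α)
    (h : ∀ d, Even ((if d = b1 then 1 else 0) + (if d = b2 then 1 else 0)
          + (if d = b3 then 1 else 0) + (if d = b4 then 1 else 0))) :
    (b2 = b1 ∧ b4 = b3) ∨ (b3 = b1 ∧ b4 = b2) ∨ (b4 = b1 ∧ b3 = b2) := by
  have h1 := h b1; have h2 := h b2; have h3 := h b3; have h4 := h b4
  simp only [Nat.even_iff] at h1 h2 h3 h4
  by_cases e21 : b2 = b1 <;> by_cases e31 : b3 = b1 <;> by_cases e41 : b4 = b1 <;>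
    by_cases e32 : b3 = b2 <;> by_cases e42 : b4 = b2 <;> by_cases e43 : b4 = b3 <;>
    simp_all <;> omega

lemma sumA2 {K : ℕ} (V : Finset (Fin K)) :
    ∑ ε : Fin K → Bool, (∑ b ∈ V, rsign (ε b))^2 = (V.card : ℝ) * 2^K := by
  classical
  have h1 : ∀ ε : Fin K → Bool, (∑ b ∈ V, rsign (ε b))^2
      = ∑ b ∈ V, ∑ b' ∈ V, rsign (ε b) * rsign (ε b') := by
    intro ε; rw [sq, Finset.sum_mul_sum]
  rw [Finset.sum_congr rfl fun ε _ => h1 ε, Finset.sum_comm]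
  have h2 : ∀ b ∈ V, ∑ ε : Fin K → Bool, ∑ b' ∈ V, rsign (ε b) * rsign (ε b')
      = (2:ℝ)^K := by
    intro b hb
    rw [Finset.sum_comm]
    have h3 : ∀ b' ∈ V, ∑ ε : Fin K → Bool, rsign (ε b) * rsign (ε b')
        = if b' = b then (2:ℝ)^K else 0 := fun b' _ => pair b b'
    rw [Finset.sum_congr rfl h3, Finset.sum_ite_eq' V b, if_pos hb]
  rw [Finset.sum_congr rfl h2, Finset.sum_const, nsmul_eq_mul]

lemma ite_mul_nonneg {K : ℕ} (P Q : Prop) [Decidable P] [Decidable Q] :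
    (0:ℝ) ≤ (if P then (2:ℝ)^K else 0) * (if Q then (1:ℝ) else 0) := by
  split_ifs <;> positivity

lemma sumA4 {K : ℕ} (V : Finset (Fin K)) :
    ∑ ε : Fin K → Bool, (∑ b ∈ V, rsign (ε b))^4 ≤ 3 * (V.card : ℝ)^2 * 2^K := by
  classical
  have h1 : ∀ ε : Fin K → Bool, (∑ b ∈ V, rsign (ε b))^4
      = ∑ b1 ∈ V, ∑ b2 ∈ V, ∑ b3 ∈ V, ∑ b4 ∈ V,
          rsign (ε b1) * rsign (ε b2) * rsign (ε b3) * rsign (ε b4) := by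
    intro ε
    have h0 : (∑ b ∈ V, rsign (ε b))^4
        = ((∑ b ∈ V, rsign (ε b)) * (∑ b ∈ V, rsign (ε b)))
          * ((∑ b ∈ V, rsign (ε b)) * (∑ b ∈ V, rsign (ε b))) := by ring
    rw [h0]
    simp only [Finset.sum_mul, Finset.mul_sum]
    apply Finset.sum_congr rfl; intro b1 _
    apply Finset.sum_congr rfl; intro b2 _
    apply Finset.sum_congr rfl; intro b3 _
    apply Finset.sum_congr rfl; intro b4 _
    ring
  rw [Finset.sum_congr rfl fun ε _ => h1 ε]
  rw [Finset.sum_comm]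
  have swap2 : ∀ b1 ∈ V, ∑ ε : Fin K → Bool, ∑ b2 ∈ V, ∑ b3 ∈ V, ∑ b4 ∈ V,
      rsign (ε b1) * rsign (ε b2) * rsign (ε b3) * rsign (ε b4)
      = ∑ b2 ∈ V, ∑ b3 ∈ V, ∑ b4 ∈ V, ∑ ε : Fin K → Bool,
      rsign (ε b1) * rsign (ε b2) * rsign (ε b3) * rsign (ε b4) := by
    intro b1 _
    rw [Finset.sum_comm]
    apply Finset.sum_congr rfl; intro b2 _
    rw [Finset.sum_comm]
    apply Finset.sum_congr rfl; intro b3 _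
    rw [Finset.sum_comm]
  rw [Finset.sum_congr rfl swap2]
  have key : ∀ b1 ∈ V, ∀ b2 ∈ V, ∀ b3 ∈ V, ∀ b4 ∈ V,
      (∑ ε : Fin K → Bool, rsign (ε b1) * rsign (ε b2) * rsign (ε b3) * rsign (ε b4))
      ≤ (if b2 = b1 then (2:ℝ)^K else 0) * (if b4 = b3 then (1:ℝ) else 0)
        + (if b3 = b1 then (2:ℝ)^K else 0) * (if b4 = b2 then (1:ℝ) else 0)
        + (if b4 = b1 then (2:ℝ)^K else 0) * (if b3 = b2 then (1:ℝ) else 0) := by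
    intro b1 _ b2 _ b3 _ b4 _
    rw [quad]
    have n1 := ite_mul_nonneg (K := K) (b2 = b1) (b4 = b3)
    have n2 := ite_mul_nonneg (K := K) (b3 = b1) (b4 = b2)
    have n3 := ite_mul_nonneg (K := K) (b4 = b1) (b3 = b2)
    by_cases hcond : ∀ d, Even ((if d = b1 then 1 else 0) + (if d = b2 then 1 else 0)
          + (if d = b3 then 1 else 0) + (if d = b4 then 1 else 0))
    · rw [if_pos hcond]
      rcases pairing b1 b2 b3 b4 hcond with ⟨ha, hb⟩ | ⟨ha, hb⟩ | ⟨ha, hb⟩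
      · rw [if_pos ha, if_pos hb]; rw [if_pos ha, if_pos hb] at n1; linarith
      · rw [if_pos ha, if_pos hb]; rw [if_pos ha, if_pos hb] at n2; linarith
      · rw [if_pos ha, if_pos hb]; rw [if_pos ha, if_pos hb] at n3; linarith
    · rw [if_neg hcond]; linarith
  have step : ∑ b1 ∈ V, ∑ b2 ∈ V, ∑ b3 ∈ V, ∑ b4 ∈ V, ∑ ε : Fin K → Bool,
        rsign (ε b1) * rsign (ε b2) * rsign (ε b3) * rsign (ε b4)
      ≤ ∑ b1 ∈ V, ∑ b2 ∈ V, ∑ b3 ∈ V, ∑ b4 ∈ V,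
        ((if b2 = b1 then (2:ℝ)^K else 0) * (if b4 = b3 then (1:ℝ) else 0)
        + (if b3 = b1 then (2:ℝ)^K else 0) * (if b4 = b2 then (1:ℝ) else 0)
        + (if b4 = b1 then (2:ℝ)^K else 0) * (if b3 = b2 then (1:ℝ) else 0)) := by
    apply Finset.sum_le_sum; intro b1 h1'
    apply Finset.sum_le_sum; intro b2 h2'
    apply Finset.sum_le_sum; intro b3 h3'
    apply Finset.sum_le_sum; intro b4 h4'
    exact key b1 h1' b2 h2' b3 h3' b4 h4'
  refine step.trans (le_of_eq ?_)
  have inner : ∀ b1 ∈ V, ∀ b2 ∈ V, ∑ b3 ∈ V, ∑ b4 ∈ V,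
      ((if b2 = b1 then (2:ℝ)^K else 0) * (if b4 = b3 then (1:ℝ) else 0)
        + (if b3 = b1 then (2:ℝ)^K else 0) * (if b4 = b2 then (1:ℝ) else 0)
        + (if b4 = b1 then (2:ℝ)^K else 0) * (if b3 = b2 then (1:ℝ) else 0))
      = (if b2 = b1 then (2:ℝ)^K else 0) * V.card + (2:ℝ)^K + (2:ℝ)^K := by
    intro b1 hb1 b2 hb2
    simp only [Finset.sum_add_distrib]
    congr 1
    · congr 1
      · -- t1
        have e3 : ∀ b3 ∈ V, ∑ b4 ∈ V,
            (if b2 = b1 then (2:ℝ)^K else 0) * (if b4 = b3 then (1:ℝ) else 0)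
            = (if b2 = b1 then (2:ℝ)^K else 0) := by
          intro b3 hb3
          rw [← Finset.mul_sum, Finset.sum_ite_eq' V b3, if_pos hb3, mul_one]
        rw [Finset.sum_congr rfl e3, Finset.sum_const, nsmul_eq_mul, mul_comm]
      · -- t2
        have e3 : ∀ b3 ∈ V, ∑ b4 ∈ V,
            (if b3 = b1 then (2:ℝ)^K else 0) * (if b4 = b2 then (1:ℝ) else 0)
            = (if b3 = b1 then (2:ℝ)^K else 0) := by
          intro b3 _
          rw [← Finset.mul_sum, Finset.sum_ite_eq' V b2, if_pos hb2, mul_one]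
        rw [Finset.sum_congr rfl e3, Finset.sum_ite_eq' V b1, if_pos hb1]
    · -- t3
      have e3 : ∀ b3 ∈ V, ∑ b4 ∈ V,
          (if b4 = b1 then (2:ℝ)^K else 0) * (if b3 = b2 then (1:ℝ) else 0)
          = (2:ℝ)^K * (if b3 = b2 then (1:ℝ) else 0) := by
        intro b3 _
        rw [← Finset.sum_mul, Finset.sum_ite_eq' V b1, if_pos hb1]
      rw [Finset.sum_congr rfl e3, ← Finset.mul_sum, Finset.sum_ite_eq' V b2, if_pos hb2,
        mul_one]
  have inner2 : ∀ b1 ∈ V, ∑ b2 ∈ V, ((if b2 = b1 then (2:ℝ)^K else 0) * V.card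
      + (2:ℝ)^K + (2:ℝ)^K) = (2:ℝ)^K * V.card + V.card * ((2:ℝ)^K + (2:ℝ)^K) := by
    intro b1 hb1
    simp only [Finset.sum_add_distrib, ← Finset.sum_mul, Finset.sum_ite_eq' V b1, if_pos hb1,
      Finset.sum_const, nsmul_eq_mul]
    ring
  calc ∑ b1 ∈ V, ∑ b2 ∈ V, ∑ b3 ∈ V, ∑ b4 ∈ V,
        ((if b2 = b1 then (2:ℝ)^K else 0) * (if b4 = b3 then (1:ℝ) else 0)
        + (if b3 = b1 then (2:ℝ)^K else 0) * (if b4 = b2 then (1:ℝ) else 0)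
        + (if b4 = b1 then (2:ℝ)^K else 0) * (if b3 = b2 then (1:ℝ) else 0))
      = ∑ b1 ∈ V, ((2:ℝ)^K * V.card + V.card * ((2:ℝ)^K + (2:ℝ)^K)) := by
        apply Finset.sum_congr rfl; intro b1 hb1
        rw [Finset.sum_congr rfl (inner b1 hb1), inner2 b1 hb1]
    _ = 3 * (V.card : ℝ)^2 * 2^K := by
        rw [Finset.sum_const, nsmul_eq_mul]; ring

lemma khintchine {K : ℕ} (V : Finset (Fin K)) :
    Real.sqrt ((V.card : ℝ)/3) * 2^K ≤ ∑ ε : Fin K → Bool, |∑ b ∈ V, rsign (ε b)| := by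
  classical
  set T : (Fin K → Bool) → ℝ := fun ε => ∑ b ∈ V, rsign (ε b) with hT
  set r : ℝ := (V.card : ℝ) with hr
  rcases Nat.eq_zero_or_pos V.card with hc | hc
  · have : r = 0 := by rw [hr, hc]; simp
    rw [this]
    simp only [zero_div, Real.sqrt_zero, zero_mul]
    exact Finset.sum_nonneg fun ε _ => abs_nonneg _
  have hr1 : (1:ℝ) ≤ r := by rw [hr]; exact_mod_cast hc
  set A1 : ℝ := ∑ ε : Fin K → Bool, |T ε| with hA1
  set A3 : ℝ := ∑ ε : Fin K → Bool, |T ε|^3 with hA3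
  set A4 : ℝ := ∑ ε : Fin K → Bool, (T ε)^4 with hA4
  have hA1nn : 0 ≤ A1 := Finset.sum_nonneg fun ε _ => abs_nonneg _
  have hA3nn : 0 ≤ A3 := Finset.sum_nonneg fun ε _ => by positivity
  have hA4nn : 0 ≤ A4 := Finset.sum_nonneg fun ε _ => by positivity
  have hA2 : ∑ ε : Fin K → Bool, (T ε)^2 = r * 2^K := sumA2 V
  have hA4le : A4 ≤ 3 * r^2 * 2^K := sumA4 V
  -- Cauchy-Schwarz 1 : (∑ T^2)^2 ≤ A1 * A3
  have cs1 : (r * 2^K)^2 ≤ A1 * A3 := by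
    have h := Finset.sum_mul_sq_le_sq_mul_sq Finset.univ
      (fun ε : Fin K → Bool => Real.sqrt |T ε|)
      (fun ε : Fin K → Bool => |T ε| * Real.sqrt |T ε|)
    have e1 : ∀ ε : Fin K → Bool,
        Real.sqrt |T ε| * (|T ε| * Real.sqrt |T ε|) = (T ε)^2 := by
      intro ε
      rw [show Real.sqrt |T ε| * (|T ε| * Real.sqrt |T ε|)
          = (Real.sqrt |T ε| * Real.sqrt |T ε|) * |T ε| by ring,
        Real.mul_self_sqrt (abs_nonneg _), ← abs_mul, abs_mul_self, ← sq]
    have e2 : ∀ ε : Fin K → Bool, (Real.sqrt |T ε|)^2 = |T ε| :=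
      fun ε => Real.sq_sqrt (abs_nonneg _)
    have e3 : ∀ ε : Fin K → Bool, (|T ε| * Real.sqrt |T ε|)^2 = |T ε|^3 := by
      intro ε
      rw [mul_pow, Real.sq_sqrt (abs_nonneg _)]; ring
    rw [Finset.sum_congr rfl fun ε _ => e1 ε, Finset.sum_congr rfl fun ε _ => e2 ε,
      Finset.sum_congr rfl fun ε _ => e3 ε] at h
    rw [← hA2] at *
    exact h
  -- Cauchy-Schwarz 2 : A3^2 ≤ (∑ T^2) * A4
  have cs2 : A3^2 ≤ (r * 2^K) * A4 := by
    have h := Finset.sum_mul_sq_le_sq_mul_sq Finset.univ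
      (fun ε : Fin K → Bool => |T ε|) (fun ε : Fin K → Bool => (T ε)^2)
    have e1 : ∀ ε : Fin K → Bool, |T ε| * (T ε)^2 = |T ε|^3 := by
      intro ε; rw [← sq_abs]; ring
    have e2 : ∀ ε : Fin K → Bool, |T ε|^2 = (T ε)^2 := fun ε => sq_abs _
    have e3 : ∀ ε : Fin K → Bool, ((T ε)^2)^2 = (T ε)^4 := fun ε => by ring
    rw [Finset.sum_congr rfl fun ε _ => e1 ε, Finset.sum_congr rfl fun ε _ => e2 ε,
      Finset.sum_congr rfl fun ε _ => e3 ε, hA2] at h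
    exact h
  have hA2pos : (0:ℝ) < r * 2^K := by positivity
  -- combine : (r 2^K)^3 ≤ A1^2 * A4
  have comb : (r * 2^K)^3 ≤ A1^2 * A4 := by
    have h1 : ((r * 2^K)^2)^2 ≤ (A1 * A3)^2 := by
      apply pow_le_pow_left₀ (by positivity) cs1
    have h2 : (A1 * A3)^2 = A1^2 * A3^2 := by ring
    have h3 : A1^2 * A3^2 ≤ A1^2 * ((r * 2^K) * A4) :=
      mul_le_mul_of_nonneg_left cs2 (by positivity)
    have h4 : ((r * 2^K)^2)^2 = (r * 2^K)^3 * (r * 2^K) := by ring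
    have h5 : A1^2 * ((r * 2^K) * A4) = (A1^2 * A4) * (r * 2^K) := by ring
    have := (h4 ▸ (h1.trans (h2.trans_le h3))).trans_eq h5
    exact le_of_mul_le_mul_right this hA2pos
  have hp : (0:ℝ) < (2:ℝ)^K := by positivity
  have h6 : r * ((2:ℝ)^K)^2 ≤ 3 * A1^2 := by
    have hpos : (0:ℝ) < 3 * r^2 * 2^K := by positivity
    rw [← mul_le_mul_iff_of_pos_right hpos]
    have c1 : r * ((2:ℝ)^K)^2 * (3*r^2*2^K) = 3*((r*2^K)^3) := by ring
    have c2 : (3:ℝ)*((r*2^K)^3) ≤ 3*(A1^2 * A4) := by linarith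
    have c3 : (3:ℝ)*(A1^2*A4) ≤ 3*(A1^2*(3*r^2*2^K)) := by nlinarith [sq_nonneg A1]
    have c4 : (3:ℝ)*(A1^2*(3*r^2*2^K)) = 3*A1^2*(3*r^2*2^K) := by ring
    linarith
  have h7 : (r/3) * ((2:ℝ)^K)^2 ≤ A1^2 := by linarith
  have h8 : Real.sqrt (r/3) * 2^K = Real.sqrt ((r/3) * ((2:ℝ)^K)^2) := by
    rw [Real.sqrt_mul (by positivity), Real.sqrt_sq (le_of_lt hp)]
  rw [h8]
  calc Real.sqrt ((r/3) * ((2:ℝ)^K)^2) ≤ Real.sqrt (A1^2) := Real.sqrt_le_sqrt h7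
    _ = A1 := Real.sqrt_sq hA1nn

lemma abs_le_linf {M : ℕ} (x : Fin M → ℝ) (i : Fin M) : |x i| ≤ linfNorm M x := by
  unfold linfNorm
  exact le_ciSup (f := fun i => |x i|) (Set.Finite.bddAbove (Set.finite_range _)) i

lemma linf_le {M : ℕ} [Nonempty (Fin M)] (x : Fin M → ℝ) (c : ℝ)
    (h : ∀ i, |x i| ≤ c) : linfNorm M x ≤ c := ciSup_le h

lemma linf_triangle {M : ℕ} [Nonempty (Fin M)] (x y z : Fin M → ℝ) :
    linfNorm M (x - y) ≤ linfNorm M (x - z) + linfNorm M (z - y) := by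
  apply linf_le
  intro i
  have h1 : (x - y) i = (x - z) i + (z - y) i := by simp only [Pi.sub_apply]; ring
  rw [h1]
  calc |(x - z) i + (z - y) i| ≤ |(x - z) i| + |(z - y) i| := abs_add_le _ _
    _ ≤ _ := add_le_add (abs_le_linf _ _) (abs_le_linf _ _)

lemma linf_comm {M : ℕ} (x y : Fin M → ℝ) : linfNorm M (x - y) = linfNorm M (y - x) := by
  unfold linfNorm
  congr 1
  funext i
  rw [Pi.sub_apply, Pi.sub_apply, abs_sub_comm]

lemma sum_range_div (m : ℕ) (hm : 0 < m) (g : ℕ → ℝ) (K : ℕ) :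
    ∑ j ∈ Finset.range (K*m), g (j / m) = ∑ b ∈ Finset.range K, m * g b := by
  induction K with
  | zero => simp
  | succ k ih =>
    have h1 : (k+1)*m = k*m + m := by ring
    rw [h1, ← Finset.sum_range_add_sum_Ico _ (Nat.le_add_right (k*m) m)]
    rw [ih, Finset.sum_range_succ]
    congr 1
    rw [Finset.sum_Ico_eq_sum_range]
    have h2 : ∀ i ∈ Finset.range (k*m + m - k*m), g ((k*m + i)/m) = g k := by
      intro i hi
      rw [Finset.mem_range] at hi
      have hi' : i < m := by omega
      congr 1
      rw [show k*m + i = i + k*m by ring, Nat.add_mul_div_right _ _ hm,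
        Nat.div_eq_of_lt hi']
      omega
    rw [Finset.sum_congr rfl h2, Finset.sum_const]
    have : k*m + m - k*m = m := by omega
    rw [this, nsmul_eq_mul, Finset.card_range]

lemma per_omega (K n L M : ℕ) (hK : K = 2*n) (hn : 1 ≤ n) (hL0 : 0 < L) (hLn : L ≤ n)
    (ι : (Fin L → Bool) → Fin M)
    (col : Fin K → Fin M → ℝ)
    (hcol : ∀ s b, col b (ι s) = rsign (s ⟨(b : ℕ) % L, Nat.mod_lt _ hL0⟩))
    (U : Finset (Fin K)) (hU : n ≤ U.card)
    (c : ℝ) (hc : 0 ≤ c) (e : (Fin K → Bool) → ℝ)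
    (h2 : ∀ ε : Fin K → Bool, linfNorm M (∑ b ∈ U, (c * rsign (ε b)) • col b)
        ≤ e ε + e (fun b => if b ∈ U then !(ε b) else ε b)) :
    c * (Real.sqrt ((n:ℝ) * L) / 3) * 2^K ≤ 2 * ∑ ε : Fin K → Bool, e ε := by
  classical
  set wj : Fin K → Fin L := fun b => ⟨(b:ℕ) % L, Nat.mod_lt _ hL0⟩ with hwj
  set T : Fin L → (Fin K → Bool) → ℝ :=
    fun j ε => ∑ b ∈ U.filter (fun b => wj b = j), rsign (ε b) with hTdef
  -- pointwise lower bound on the sup norm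
  have hpoint : ∀ ε : Fin K → Bool,
      c * ∑ j, |T j ε| ≤ linfNorm M (∑ b ∈ U, (c * rsign (ε b)) • col b) := by
    intro ε
    set s' : Fin L → Bool := fun j => decide (0 ≤ T j ε) with hs'
    have happ : (∑ b ∈ U, (c * rsign (ε b)) • col b) (ι s') = c * ∑ j, |T j ε| := by
      rw [Finset.sum_apply]
      simp only [Pi.smul_apply, smul_eq_mul, hcol]
      rw [← Finset.sum_fiberwise_of_maps_to (g := wj) (t := Finset.univ)
        (fun b _ => Finset.mem_univ (wj b))]
      rw [Finset.mul_sum]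
      apply Finset.sum_congr rfl
      intro j _
      have e1 : ∀ b ∈ U.filter (fun b => wj b = j),
          c * rsign (ε b) * rsign (s' ⟨(b:ℕ) % L, Nat.mod_lt _ hL0⟩)
          = (c * rsign (s' j)) * rsign (ε b) := by
        intro b hb
        have : wj b = j := (Finset.mem_filter.mp hb).2
        rw [← this]; ring
      rw [Finset.sum_congr rfl e1, ← Finset.mul_sum]
      have hTT : (∑ i ∈ U.filter (fun b => wj b = j), rsign (ε i)) = T j ε := rfl
      rw [hTT]
      by_cases hj : 0 ≤ T j ε
      · have : s' j = true := by simp [hs', hj]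
        rw [this, abs_of_nonneg hj]; simp [rsign]
      · have : s' j = false := by simp [hs', hj]
        rw [this, abs_of_neg (lt_of_not_ge hj)]; simp [rsign]
    calc c * ∑ j, |T j ε| = (∑ b ∈ U, (c * rsign (ε b)) • col b) (ι s') := happ.symm
      _ ≤ |(∑ b ∈ U, (c * rsign (ε b)) • col b) (ι s')| := le_abs_self _
      _ ≤ _ := abs_le_linf _ _
  -- fiber cardinality bounds
  have hfib : ∀ j : Fin L, ((U.filter fun b => wj b = j).card : ℝ) * L ≤ 3 * n := by
    intro j
    have h1 : (U.filter fun b => wj b = j).card ≤ (Finset.univ.filter fun b => wj b = j).card :=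
      Finset.card_le_card (Finset.filter_subset_filter _ (Finset.subset_univ U))
    have h2' : (Finset.univ.filter fun b : Fin K => wj b = j).card ≤ K / L + 1 := by
      have hmap : ∀ b ∈ (Finset.univ.filter fun b : Fin K => wj b = j),
          (fun b : Fin K => (b:ℕ)/L) b ∈ Finset.range (K/L+1) := by
        intro b hb
        rw [Finset.mem_range]
        show (b:ℕ)/L < K/L + 1
        have : (b:ℕ)/L ≤ K/L := Nat.div_le_div_right (le_of_lt b.isLt)
        omega
      have hinj : Set.InjOn (fun b : Fin K => (b:ℕ)/L)
          ((Finset.univ.filter fun b : Fin K => wj b = j) : Set (Fin K)) := by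
        intro a ha b hb hab
        simp only [Finset.coe_filter, Set.mem_setOf_eq] at ha hb
        have ha' : (a:ℕ) % L = (j:ℕ) := congrArg Fin.val ha.2
        have hb' : (b:ℕ) % L = (j:ℕ) := congrArg Fin.val hb.2
        apply Fin.ext
        have hab' : (a:ℕ)/L = (b:ℕ)/L := hab
        have e1 := Nat.div_add_mod (a:ℕ) L
        have e2 := Nat.div_add_mod (b:ℕ) L
        rw [← e1, ← e2, hab', ha', hb']
      have := Finset.card_le_card_of_injOn (fun b : Fin K => (b:ℕ)/L) hmap hinj
      simpa using this
    have h3 : (U.filter fun b => wj b = j).card * L ≤ 3 * n := by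
      have h4 : (U.filter fun b => wj b = j).card * L ≤ (K/L + 1) * L :=
        Nat.mul_le_mul_right L (le_trans h1 h2')
      have h5 : K/L*L ≤ K := Nat.div_mul_le_self K L
      have : (K/L+1)*L = K/L*L + L := by ring
      omega
    calc ((U.filter fun b => wj b = j).card : ℝ) * L
        = (((U.filter fun b => wj b = j).card * L : ℕ) : ℝ) := by push_cast; ring
      _ ≤ ((3*n : ℕ) : ℝ) := by exact_mod_cast h3
      _ = 3 * n := by push_cast; ring
  have hsumfib : ∑ j : Fin L, ((U.filter fun b => wj b = j).card : ℝ) = (U.card : ℝ) := by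
    have hnat : U.card = ∑ j : Fin L, (U.filter fun b => wj b = j).card :=
      Finset.card_eq_sum_card_fiberwise (fun x _ => Finset.mem_univ (wj x))
    rw [hnat]; push_cast; ring
  have hn1 : (1:ℝ) ≤ (n:ℝ) := by exact_mod_cast hn
  have hL1 : (1:ℝ) ≤ (L:ℝ) := by exact_mod_cast hL0
  have hstep : ∀ j : Fin L, ((U.filter fun b => wj b = j).card : ℝ)
      * Real.sqrt L / (3 * Real.sqrt n)
      ≤ Real.sqrt (((U.filter fun b => wj b = j).card : ℝ)/3) := by
    intro j
    set ρ : ℝ := ((U.filter fun b => wj b = j).card : ℝ) with hρ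
    have hρ0 : 0 ≤ ρ := Nat.cast_nonneg _
    have e1 : ρ * Real.sqrt L / (3 * Real.sqrt n) = Real.sqrt (ρ^2 * L / (9*n)) := by
      rw [Real.sqrt_div (by positivity) , Real.sqrt_mul (by positivity),
        Real.sqrt_sq hρ0,
        show (9:ℝ)*n = 3^2*n by norm_num, Real.sqrt_mul (by positivity),
        Real.sqrt_sq (by norm_num : (0:ℝ) ≤ 3)]
    rw [e1]
    apply Real.sqrt_le_sqrt
    rw [div_le_div_iff₀ (by positivity) (by norm_num)]
    nlinarith [hfib j, mul_le_mul_of_nonneg_left (hfib j) hρ0]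
  have big : Real.sqrt ((n:ℝ)*L)/3 * 2^K ≤ ∑ j : Fin L, ∑ ε : Fin K → Bool, |T j ε| := by
    have e0 : Real.sqrt ((n:ℝ)*L)/3 = (n:ℝ) * Real.sqrt L / (3 * Real.sqrt n) := by
      rw [Real.sqrt_mul (by positivity)]
      rw [show (n:ℝ) * Real.sqrt L / (3 * Real.sqrt n)
          = ((n:ℝ) / Real.sqrt n) * Real.sqrt L / 3 by ring]
      rw [Real.div_sqrt]
    calc Real.sqrt ((n:ℝ)*L)/3 * 2^K = ((n:ℝ) * Real.sqrt L / (3 * Real.sqrt n)) * 2^K := by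
          rw [e0]
      _ ≤ ((U.card : ℝ) * Real.sqrt L / (3 * Real.sqrt n)) * 2^K := by
          have : (n:ℝ) ≤ (U.card : ℝ) := by exact_mod_cast hU
          have h9 : (0:ℝ) ≤ Real.sqrt L / (3 * Real.sqrt n) * 2^K := by positivity
          calc (n:ℝ) * Real.sqrt L / (3 * Real.sqrt n) * 2^K
              = (n:ℝ) * (Real.sqrt L / (3 * Real.sqrt n) * 2^K) := by ring
            _ ≤ (U.card : ℝ) * (Real.sqrt L / (3 * Real.sqrt n) * 2^K) :=
              mul_le_mul_of_nonneg_right this h9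
            _ = (U.card : ℝ) * Real.sqrt L / (3 * Real.sqrt n) * 2^K := by ring
      _ = ∑ j : Fin L, ((U.filter fun b => wj b = j).card : ℝ)
            * Real.sqrt L / (3 * Real.sqrt n) * 2^K := by
          rw [← hsumfib]
          rw [Finset.sum_mul, Finset.sum_div, Finset.sum_mul]
      _ ≤ ∑ j : Fin L, Real.sqrt (((U.filter fun b => wj b = j).card : ℝ)/3) * 2^K := by
          apply Finset.sum_le_sum; intro j _
          exact mul_le_mul_of_nonneg_right (hstep j) (by positivity)
      _ ≤ ∑ j : Fin L, ∑ ε : Fin K → Bool, |T j ε| := by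
          apply Finset.sum_le_sum; intro j _
          exact khintchine _
  -- put it together
  calc c * (Real.sqrt ((n:ℝ)*L)/3) * 2^K = c * (Real.sqrt ((n:ℝ)*L)/3 * 2^K) := by ring
    _ ≤ c * ∑ j : Fin L, ∑ ε : Fin K → Bool, |T j ε| := mul_le_mul_of_nonneg_left big hc
    _ = ∑ ε : Fin K → Bool, c * ∑ j, |T j ε| := by
        rw [Finset.sum_comm, Finset.mul_sum]
    _ ≤ ∑ ε : Fin K → Bool, (e ε + e (fun b => if b ∈ U then !(ε b) else ε b)) := by
        apply Finset.sum_le_sum; intro ε _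
        exact (hpoint ε).trans (h2 ε)
    _ = 2 * ∑ ε : Fin K → Bool, e ε := by
        rw [Finset.sum_add_distrib]
        have hinv : Function.Involutive (fun (ε : Fin K → Bool) b => if b ∈ U then !(ε b) else ε b) := by
          intro ε; funext b; by_cases hb : b ∈ U <;> simp [hb]
        have : ∑ ε : Fin K → Bool, e (fun b => if b ∈ U then !(ε b) else ε b)
            = ∑ ε : Fin K → Bool, e ε :=
          Fintype.sum_bijective _ hinv.bijective _ _ (fun ε => rfl)
        rw [this]; ring

lemma key (n M N : ℕ) (hn : 1 ≤ n) (hM : 2*n ≤ M) (hN : 2*n ≤ N)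
    (Ω : Type) [Fintype Ω] (P : Ω → ℝ) (hP : ∀ ω, 0 ≤ P ω) (hPsum : ∑ ω, P ω = 1)
    (t : Ω → Fin n → Fin N) (φ : Ω → (Fin n → (Fin M → ℝ)) → (Fin M → ℝ)) (b : ℝ)
    (hub : ∀ f : Fin N → Fin M → ℝ, (∀ j, linfNorm M (f j) ≤ 1) →
      ∑ ω, P ω * linfNorm M ((N : ℝ)⁻¹ • ∑ j, f j - φ ω (fun l => f (t ω l))) ≤ b) :
    Real.sqrt (((min (Nat.log 2 M) n : ℕ) : ℝ) / (n:ℝ)) / 12 ≤ b := by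
  classical
  set K := 2*n with hK
  set L := min (Nat.log 2 M) n with hLdef
  have hM2 : 2 ≤ M := by omega
  have hN1 : 0 < N := by omega
  have hL0 : 0 < L := by
    rw [hLdef]
    exact lt_min (Nat.log_pos one_lt_two hM2) (by omega)
  have hLn : L ≤ n := min_le_right _ _
  have hK0 : 0 < K := by omega
  have hMne : Nonempty (Fin M) := ⟨⟨0, by omega⟩⟩
  set m := N / K with hm
  have hm1 : 1 ≤ m := (Nat.one_le_div_iff hK0).mpr hN
  have hKmN : K * m ≤ N := by
    rw [mul_comm]; exact Nat.div_mul_le_self N K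
  -- the embedding of sign patterns into coordinates
  have hcard : Fintype.card (Fin L → Bool) ≤ Fintype.card (Fin M) := by
    rw [Fintype.card_fun, Fintype.card_bool, Fintype.card_fin, Fintype.card_fin]
    calc 2^L ≤ 2^(Nat.log 2 M) := Nat.pow_le_pow_right (by norm_num) (min_le_left _ _)
      _ ≤ M := Nat.pow_log_le_self 2 (by omega)
  obtain ⟨ι⟩ := Function.Embedding.nonempty_of_card_le hcard
  -- patterns
  set pat : Fin K → Fin M → ℝ := fun b i =>
    if h : ∃ s : Fin L → Bool, ι s = i then rsign (h.choose ⟨(b:ℕ) % L, Nat.mod_lt _ hL0⟩)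
    else 0 with hpat
  have hcol : ∀ (s : Fin L → Bool) (b : Fin K),
      pat b (ι s) = rsign (s ⟨(b : ℕ) % L, Nat.mod_lt _ hL0⟩) := by
    intro s b
    have hex : ∃ s' : Fin L → Bool, ι s' = ι s := ⟨s, rfl⟩
    rw [hpat]
    simp only
    rw [dif_pos hex]
    have : hex.choose = s := ι.injective hex.choose_spec
    rw [this]
  have hpat_abs : ∀ b i, |pat b i| ≤ 1 := by
    intro b i
    rw [hpat]
    simp only
    split_ifs with h
    · rw [rsign_abs]
    · norm_num
  -- block map
  set bb : Fin N → Fin K := fun j =>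
    if h : (j:ℕ) < K*m then ⟨(j:ℕ)/m, (Nat.div_lt_iff_lt_mul (by omega)).mpr h⟩
    else ⟨0, hK0⟩ with hbb
  have hbbval : ∀ (j : Fin N), (j:ℕ) < K*m → ((bb j) : ℕ) = (j:ℕ)/m := by
    intro j hj
    rw [hbb]; simp only; rw [dif_pos hj]
  -- random inputs
  set F : (Fin K → Bool) → Fin N → Fin M → ℝ := fun ε j i =>
    if (j:ℕ) < K*m then rsign (ε (bb j)) * pat (bb j) i else 0 with hF
  have hball : ∀ ε j, linfNorm M (F ε j) ≤ 1 := by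
    intro ε j
    apply linf_le
    intro i
    rw [hF]
    simp only
    split_ifs with h
    · rw [abs_mul, rsign_abs, one_mul]; exact hpat_abs _ _
    · norm_num
  -- the error of the algorithm
  set err : Ω → (Fin K → Bool) → ℝ := fun ω ε =>
    linfNorm M ((N : ℝ)⁻¹ • ∑ j, F ε j - φ ω (fun l => F ε (t ω l))) with herr
  have hB : ∀ ε, ∑ ω, P ω * err ω ε ≤ b := fun ε => hub (F ε) (hball ε)
  -- grouped sums
  have hsumF : ∀ (h : Fin K → ℝ),
      ∑ j : Fin N, (if (j:ℕ) < K*m then h (bb j) else 0) = m * ∑ b : Fin K, h b := by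
    intro h
    have hm0 : 0 < m := by omega
    set g : ℕ → ℝ := fun x =>
      if hx : x < K*m then h ⟨x/m, (Nat.div_lt_iff_lt_mul hm0).mpr hx⟩ else 0 with hg
    set g2 : ℕ → ℝ := fun y => if hy : y < K then h ⟨y, hy⟩ else 0 with hg2
    have s1 : ∀ j : Fin N, (if (j:ℕ) < K*m then h (bb j) else 0) = g (j:ℕ) := by
      intro j
      rw [hg]
      by_cases hj : (j:ℕ) < K*m
      · rw [if_pos hj]; simp only; rw [dif_pos hj]
        congr 1
        exact Fin.ext (hbbval j hj)
      · rw [if_neg hj]; simp only; rw [dif_neg hj]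
    rw [Finset.sum_congr rfl (fun j _ => s1 j), Fin.sum_univ_eq_sum_range g N]
    rw [← Finset.sum_subset (Finset.range_subset_range.mpr hKmN)
      (by intro x _ hx; rw [Finset.mem_range] at hx; rw [hg]; simp only; rw [dif_neg hx])]
    have s2 : ∀ x ∈ Finset.range (K*m), g x = g2 (x/m) := by
      intro x hx
      rw [Finset.mem_range] at hx
      rw [hg, hg2]
      simp only
      rw [dif_pos hx, dif_pos ((Nat.div_lt_iff_lt_mul hm0).mpr hx)]
    rw [Finset.sum_congr rfl s2, sum_range_div m hm0 g2 K, ← Finset.mul_sum]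
    congr 1
    have s3 : ∀ b : Fin K, h b = g2 (b:ℕ) := by
      intro b
      rw [hg2]; simp only; rw [dif_pos b.isLt]
    rw [Finset.sum_congr rfl (fun b (_ : b ∈ Finset.univ) => s3 b),
      Fin.sum_univ_eq_sum_range g2 K]
  -- per omega lower bound
  have hperw : ∀ ω : Ω, ((m:ℝ)/N) * (Real.sqrt ((n:ℝ)*L)/3) * 2^K
      ≤ ∑ ε : Fin K → Bool, err ω ε := by
    intro ω
    set S : Finset (Fin K) := Finset.image (fun l => bb (t ω l)) Finset.univ with hS
    set U : Finset (Fin K) := Sᶜ with hU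
    have hUcard : n ≤ U.card := by
      have h1 : S.card ≤ n := le_trans Finset.card_image_le (by simp)
      have h2 : U.card = K - S.card := by
        rw [hU, Finset.card_compl, Fintype.card_fin]
      omega
    set neg : (Fin K → Bool) → (Fin K → Bool) := fun ε b => if b ∈ U then !(ε b) else ε b
      with hneg
    have hmean : ∀ (ε' : Fin K → Bool) (i : Fin M),
        (∑ j, F ε' j) i = m * ∑ bk : Fin K, rsign (ε' bk) * pat bk i := by
      intro ε' i
      rw [Finset.sum_apply]
      exact hsumF (fun bk => rsign (ε' bk) * pat bk i)
    have h2 : ∀ ε : Fin K → Bool,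
        linfNorm M (∑ bk ∈ U, ((2*(m:ℝ)/N) * rsign (ε bk)) • pat bk)
          ≤ err ω ε + err ω (neg ε) := by
      intro ε
      have hq : (fun l => F ε (t ω l)) = (fun l => F (neg ε) (t ω l)) := by
        funext l
        funext i
        show (if ((t ω l : Fin N) : ℕ) < K*m then rsign (ε (bb (t ω l))) * pat (bb (t ω l)) i else 0)
          = (if ((t ω l : Fin N) : ℕ) < K*m then rsign (neg ε (bb (t ω l))) * pat (bb (t ω l)) i else 0)
        by_cases hj : ((t ω l : Fin N) : ℕ) < K*m
        · rw [if_pos hj, if_pos hj]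
          have hmem : bb (t ω l) ∈ S := Finset.mem_image_of_mem _ (Finset.mem_univ l)
          have hee : neg ε (bb (t ω l)) = ε (bb (t ω l)) := by
            show (if bb (t ω l) ∈ U then !(ε (bb (t ω l))) else ε (bb (t ω l))) = ε (bb (t ω l))
            rw [if_neg (by rw [hU]; simp [hmem])]
          rw [hee]
        · rw [if_neg hj, if_neg hj]
      have hdiff : ((N : ℝ)⁻¹ • ∑ j, F ε j) - ((N : ℝ)⁻¹ • ∑ j, F (neg ε) j)
          = ∑ bk ∈ U, ((2*(m:ℝ)/N) * rsign (ε bk)) • pat bk := by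
        funext i
        simp only [Pi.sub_apply, Pi.smul_apply, smul_eq_mul]
        rw [hmean ε i, hmean (neg ε) i, Finset.sum_apply]
        simp only [Pi.smul_apply, smul_eq_mul]
        have hR : ∑ bk ∈ U, (2*(m:ℝ)/N) * rsign (ε bk) * pat bk i
            = ∑ bk : Fin K, (if bk ∈ U then (2*(m:ℝ)/N) * rsign (ε bk) * pat bk i else 0) := by
          rw [Finset.sum_ite_mem, Finset.univ_inter]
        rw [hR]
        have hL2 : (N:ℝ)⁻¹ * (m * ∑ bk : Fin K, rsign (ε bk) * pat bk i)
            - (N:ℝ)⁻¹ * (m * ∑ bk : Fin K, rsign (neg ε bk) * pat bk i)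
            = ∑ bk : Fin K, (N:ℝ)⁻¹ * m *
                (rsign (ε bk) * pat bk i - rsign (neg ε bk) * pat bk i) := by
          rw [← Finset.mul_sum, Finset.sum_sub_distrib]
          ring
        rw [hL2]
        apply Finset.sum_congr rfl
        intro bk _
        by_cases hbk : bk ∈ U
        · rw [if_pos hbk]
          have : neg ε bk = !(ε bk) := by
            show (if bk ∈ U then !(ε bk) else ε bk) = !(ε bk)
            rw [if_pos hbk]
          rw [this, rsign_not]
          rw [div_eq_mul_inv]
          ring
        · have : neg ε bk = ε bk := by
            show (if bk ∈ U then !(ε bk) else ε bk) = ε bk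
            rw [if_neg hbk]
          rw [this, if_neg hbk]
          ring
      rw [← hdiff]
      have htri := linf_triangle ((N : ℝ)⁻¹ • ∑ j, F ε j) ((N : ℝ)⁻¹ • ∑ j, F (neg ε) j)
        (φ ω (fun l => F ε (t ω l)))
      have he1 : err ω ε = linfNorm M ((N : ℝ)⁻¹ • ∑ j, F ε j - φ ω (fun l => F ε (t ω l))) := rfl
      have he2 : err ω (neg ε)
          = linfNorm M ((N : ℝ)⁻¹ • ∑ j, F (neg ε) j - φ ω (fun l => F (neg ε) (t ω l))) := rfl
      rw [he1, he2, ← hq]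
      calc linfNorm M ((N : ℝ)⁻¹ • ∑ j, F ε j - (N : ℝ)⁻¹ • ∑ j, F (neg ε) j)
          ≤ linfNorm M ((N : ℝ)⁻¹ • ∑ j, F ε j - φ ω (fun l => F ε (t ω l)))
            + linfNorm M (φ ω (fun l => F ε (t ω l)) - (N : ℝ)⁻¹ • ∑ j, F (neg ε) j) := htri
        _ = _ := by rw [linf_comm (φ ω (fun l => F ε (t ω l)))]
    have hc : (0:ℝ) ≤ 2*(m:ℝ)/N := by positivity
    have hkey := per_omega K n L M hK hn hL0 hLn (fun s => ι s) pat hcol U hUcard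
      (2*(m:ℝ)/N) hc (err ω) h2
    have he3 : 2*(m:ℝ)/N * (Real.sqrt ((n:ℝ)*L)/3) * 2^K
        = 2*(((m:ℝ)/N) * (Real.sqrt ((n:ℝ)*L)/3) * 2^K) := by ring
    linarith [hkey, he3.symm.trans_le hkey]
  -- averaging over omega
  have hsum2 : ((m:ℝ)/N) * (Real.sqrt ((n:ℝ)*L)/3) * 2^K ≤ ∑ ω, P ω * ∑ ε : Fin K → Bool, err ω ε := by
    calc ((m:ℝ)/N) * (Real.sqrt ((n:ℝ)*L)/3) * 2^K
        = ∑ ω, P ω * (((m:ℝ)/N) * (Real.sqrt ((n:ℝ)*L)/3) * 2^K) := by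
          rw [← Finset.sum_mul, hPsum, one_mul]
      _ ≤ _ := Finset.sum_le_sum (fun ω _ => mul_le_mul_of_nonneg_left (hperw ω) (hP ω))
  have hswap : ∑ ω, P ω * ∑ ε : Fin K → Bool, err ω ε
      = ∑ ε : Fin K → Bool, ∑ ω, P ω * err ω ε := by
    simp_rw [Finset.mul_sum]
    exact Finset.sum_comm
  have hb2 : ∑ ε : Fin K → Bool, ∑ ω, P ω * err ω ε ≤ (2:ℝ)^K * b := by
    calc ∑ ε : Fin K → Bool, ∑ ω, P ω * err ω ε ≤ ∑ _ε : Fin K → Bool, b :=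
          Finset.sum_le_sum (fun ε _ => hB ε)
      _ = (2:ℝ)^K * b := by
          rw [Finset.sum_const, nsmul_eq_mul, Finset.card_univ]
          congr 1
          rw [Fintype.card_fun, Fintype.card_bool, Fintype.card_fin]
          push_cast
          ring
  have hfinal1 : ((m:ℝ)/N) * (Real.sqrt ((n:ℝ)*L)/3) ≤ b := by
    have hp : (0:ℝ) < 2^K := by positivity
    have hchain := le_trans hsum2 (le_trans (le_of_eq hswap) hb2)
    have h2' : ((m:ℝ)/N) * (Real.sqrt ((n:ℝ)*L)/3) * 2^K ≤ b * 2^K := by linarith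
    exact le_of_mul_le_mul_right h2' hp
  -- arithmetic endgame
  have hNlt : (N:ℝ) ≤ 4*n*m := by
    have hdm := Nat.div_add_mod N K
    rw [← hm] at hdm
    have h2 := Nat.mod_lt N hK0
    have h3 : K ≤ K*m := Nat.le_mul_of_pos_right K (by omega)
    have h4 : N ≤ 2*(K*m) := by omega
    calc (N:ℝ) ≤ ((2*(K*m) : ℕ) : ℝ) := by exact_mod_cast h4
      _ = 4*n*m := by rw [hK]; push_cast; ring
  have hq4 : 1/(4*(n:ℝ)) ≤ (m:ℝ)/N := by
    rw [div_le_div_iff₀ (by positivity) (by positivity)]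
    calc 1*(N:ℝ) = (N:ℝ) := one_mul _
      _ ≤ 4*n*m := hNlt
      _ = (m:ℝ)*(4*n) := by ring
  have hn0 : (0:ℝ) < (n:ℝ) := by positivity
  have hnn : Real.sqrt (n:ℝ) * Real.sqrt (n:ℝ) = (n:ℝ) := Real.mul_self_sqrt (le_of_lt hn0)
  have hsn0 : (0:ℝ) < Real.sqrt (n:ℝ) := Real.sqrt_pos.mpr hn0
  have hsq : Real.sqrt ((L:ℝ)/(n:ℝ)) = Real.sqrt ((n:ℝ)*(L:ℝ))/(n:ℝ) := by
    rw [Real.sqrt_div (by positivity : (0:ℝ) ≤ (L:ℝ)),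
      Real.sqrt_mul (le_of_lt hn0)]
    rw [div_eq_div_iff (by positivity) (ne_of_gt hn0)]
    linear_combination (-(Real.sqrt (L:ℝ))) * hnn
  have heq : Real.sqrt ((L:ℝ)/(n:ℝ))/12 = (1/(4*(n:ℝ))) * (Real.sqrt ((n:ℝ)*(L:ℝ))/3) := by
    rw [hsq]
    field_simp
    ring
  rw [heq]
  calc (1/(4*(n:ℝ))) * (Real.sqrt ((n:ℝ)*(L:ℝ))/3)
      ≤ ((m:ℝ)/N) * (Real.sqrt ((n:ℝ)*(L:ℝ))/3) :=
        mul_le_mul_of_nonneg_right hq4 (by positivity)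
    _ ≤ b := hfinal1

end MeanLinfAux

open MeanLinfAux in
/-- There are constants `c₀, c₁ > 0` such that for all `n, M, N`
with `1 ≤ n ≤ c₀·min(M,N)`, every randomized algorithm using `n` function values for
computing the mean `S_N` on `B_∞^N(L_∞^M)` has worst-case expected error at least
`c₁ · min(n^(−1/2)·(log₂(M+1))^(1/2), 1)`: any upper bound `b` for the expected
errors over the unit ball is at least that much. -/
theorem mean_linf_lower :
    ∃ c₀ c₁ : ℝ, 0 < c₀ ∧ 0 < c₁ ∧
      ∀ (n M N : ℕ), 1 ≤ n → (n : ℝ) ≤ c₀ * min (M : ℝ) (N : ℝ) →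
        ∀ (Ω : Type) [Fintype Ω] (P : Ω → ℝ),
          (∀ ω, 0 ≤ P ω) → (∑ ω, P ω = 1) →
          ∀ (t : Ω → Fin n → Fin N)
            (φ : Ω → (Fin n → (Fin M → ℝ)) → (Fin M → ℝ)) (b : ℝ),
            (∀ f : Fin N → Fin M → ℝ, (∀ j, linfNorm M (f j) ≤ 1) →
              ∑ ω, P ω *
                  linfNorm M
                    ((N : ℝ)⁻¹ • ∑ j, f j - φ ω (fun l => f (t ω l))) ≤ b) →
            c₁ * min ((n : ℝ) ^ (-(1 / 2 : ℝ)) *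
                Real.logb 2 (M + 1) ^ (1 / 2 : ℝ)) 1 ≤ b := by
  refine ⟨1/2, 1/17, by norm_num, by norm_num, ?_⟩
  intro n M N hn hbound Ω _ P hP hPsum t φ b hub
  have hminc : min ((M:ℕ):ℝ) ((N:ℕ):ℝ) = ((min M N : ℕ) : ℝ) := (Nat.cast_min _ _).symm
  have h2n : (2*n : ℕ) ≤ min M N := by
    have h1 : (2*(n:ℝ)) ≤ ((min M N : ℕ):ℝ) := by rw [← hminc]; linarith [hbound]
    exact_mod_cast h1
  have hM : 2*n ≤ M := le_trans h2n (min_le_left _ _)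
  have hN : 2*n ≤ N := le_trans h2n (min_le_right _ _)
  have hkey := key n M N hn hM hN Ω P hP hPsum t φ b hub
  set L := min (Nat.log 2 M) n with hL
  have hM2 : 2 ≤ M := by omega
  have hlogpos : 0 < Nat.log 2 M := Nat.log_pos one_lt_two hM2
  have hn0 : (0:ℝ) < (n:ℝ) := by exact_mod_cast hn
  -- logb 2 (M+1) ≤ 2 * Nat.log 2 M
  have ha : Real.logb 2 ((M:ℝ)+1) ≤ 2*(Nat.log 2 M : ℝ) := by
    have h2 : (M+1 : ℕ) ≤ 2^(Nat.log 2 M + 1) := Nat.lt_pow_succ_log_self (by norm_num) M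
    have h1 : (M:ℝ)+1 ≤ 2^(Nat.log 2 M + 1) := by
      calc (M:ℝ)+1 = ((M+1 : ℕ):ℝ) := by push_cast; ring
        _ ≤ ((2^(Nat.log 2 M + 1) : ℕ) : ℝ) := by exact_mod_cast h2
        _ = 2^(Nat.log 2 M + 1) := by push_cast; ring
    have h3 : Real.logb 2 ((M:ℝ)+1) ≤ ((Nat.log 2 M + 1 : ℕ) : ℝ) := by
      rw [Real.logb_le_iff_le_rpow (by norm_num) (by positivity), Real.rpow_natCast]
      exact_mod_cast h1
    have h4 : ((Nat.log 2 M + 1 : ℕ) : ℝ) ≤ 2*(Nat.log 2 M : ℝ) := by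
      have h5 : (1:ℝ) ≤ (Nat.log 2 M : ℝ) := by exact_mod_cast hlogpos
      push_cast
      linarith
    linarith
  set a := Real.logb 2 ((M:ℝ)+1) with haa
  have ha0 : 0 < a := Real.logb_pos (by norm_num) (by
    have : (2:ℝ) ≤ (M:ℝ) := by exact_mod_cast hM2
    linarith)
  have hcastL : (L:ℝ) = min ((Nat.log 2 M : ℕ):ℝ) ((n:ℕ):ℝ) := by
    rw [hL]; exact Nat.cast_min _ _
  have hmin : min a (n:ℝ) ≤ 2*(L:ℝ) := by
    have h5 : min a (n:ℝ) ≤ min (2*((Nat.log 2 M : ℕ):ℝ)) (2*(n:ℝ)) := by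
      apply le_min
      · exact le_trans (min_le_left _ _) ha
      · have h6 := min_le_right a (n:ℝ); linarith
    have h7 : min (2*((Nat.log 2 M : ℕ):ℝ)) (2*(n:ℝ))
        = 2 * min ((Nat.log 2 M : ℕ):ℝ) ((n:ℕ):ℝ) :=
      (mul_min_of_nonneg _ _ (by norm_num : (0:ℝ) ≤ 2)).symm
    rw [hcastL]
    linarith [h5, h7.le]
  have hexpr : (n:ℝ)^(-(1/2:ℝ)) * a^(1/2:ℝ) = Real.sqrt (a/(n:ℝ)) := by
    rw [Real.rpow_neg (le_of_lt hn0), ← Real.sqrt_eq_rpow, ← Real.sqrt_eq_rpow,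
      Real.sqrt_div (le_of_lt ha0)]
    rw [div_eq_mul_inv]
    ring
  have hmono : min (Real.sqrt (a/(n:ℝ))) 1 = Real.sqrt (min (a/(n:ℝ)) 1) := by
    have hms : Monotone Real.sqrt := fun _ _ h => Real.sqrt_le_sqrt h
    rw [hms.map_min, Real.sqrt_one]
  have hminval : min (a/(n:ℝ)) 1 = (min a (n:ℝ))/(n:ℝ) := by
    rw [show (1:ℝ) = (n:ℝ)/(n:ℝ) from (div_self (ne_of_gt hn0)).symm,
      min_div_div_right (le_of_lt hn0)]
  have hfinal : min ((n:ℝ)^(-(1/2:ℝ)) * a^(1/2:ℝ)) 1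
      ≤ Real.sqrt 2 * Real.sqrt ((L:ℝ)/(n:ℝ)) := by
    rw [hexpr, hmono, hminval]
    calc Real.sqrt ((min a (n:ℝ))/(n:ℝ)) ≤ Real.sqrt ((2*(L:ℝ))/(n:ℝ)) := by
          apply Real.sqrt_le_sqrt
          exact (div_le_div_iff_of_pos_right hn0).mpr hmin
      _ = Real.sqrt 2 * Real.sqrt ((L:ℝ)/(n:ℝ)) := by
          rw [show (2*(L:ℝ))/(n:ℝ) = 2*((L:ℝ)/(n:ℝ)) by ring,
            Real.sqrt_mul (by norm_num)]
  have hsqrt2 : Real.sqrt 2 ≤ 17/12 := by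
    have h8 : Real.sqrt 2 ≤ Real.sqrt ((17/12)^2) := Real.sqrt_le_sqrt (by norm_num)
    rwa [Real.sqrt_sq (by norm_num)] at h8
  have h0 : 0 ≤ Real.sqrt ((L:ℝ)/(n:ℝ)) := Real.sqrt_nonneg _
  calc (1/17 : ℝ) * min ((n:ℝ)^(-(1/2:ℝ)) * a^(1/2:ℝ)) 1
      ≤ (1/17) * (Real.sqrt 2 * Real.sqrt ((L:ℝ)/(n:ℝ))) :=
        mul_le_mul_of_nonneg_left hfinal (by norm_num)
    _ ≤ Real.sqrt ((L:ℝ)/(n:ℝ))/12 := by nlinarith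
    _ ≤ b := hkey
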